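/- If 1 < β₁ < β₂ ≤ 1.202, then |(β₂^8 − β₁^8)/(β₂^7 − β₁^7)| + |β₂^7 β₁^7 (β₂ − β₁)/(β₂^7 − β₁^7)| ≤ 2. -/

import Mathlib

theorem coeff_bound (b1 b2 : ℝ) (h1 : 1 < b1) (h12 : b1 < b2) (h2 : b2 ≤ 1.202) :
    |(b2 ^ 8 - b1 ^ 8) / (b2 ^ 7 - b1 ^ 7)| +
      |b2 ^ 7 * b1 ^ 7 * (b2 - b1) / (b2 ^ 7 - b1 ^ 7)| ≤ 2 := by
  have h2' : b2 ≤ 601/500 := by norm_num at h2 ⊢; linarith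
  have hb1 : (0:ℝ) < b1 := by linarith
  have hb2 : (0:ℝ) < b2 := by linarith
  have hp7 : b1^7 < b2^7 := pow_lt_pow_left₀ h12 hb1.le (by norm_num)
  have hp8 : b1^8 < b2^8 := pow_lt_pow_left₀ h12 hb1.le (by norm_num)
  have hd : (0:ℝ) < b2^7 - b1^7 := by linarith
  -- single variable fact
  have hx : (601/500:ℝ)^4*(1+b1^7) ≤ 7*(2-b1)*b1^3 := by
    have hb1' : b1 ≤ 601/500 := by linarith
    nlinarith [sq_nonneg (b1-1), sq_nonneg (601/500-b1),
      mul_nonneg (sub_nonneg.2 hb1') (by linarith : (0:ℝ) ≤ b1 - 1),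
      mul_nonneg (mul_nonneg (sub_nonneg.2 hb1') (by linarith : (0:ℝ) ≤ b1 - 1)) (by linarith : (0:ℝ) ≤ b1 - 1),
      mul_nonneg (mul_nonneg (sub_nonneg.2 hb1') (sub_nonneg.2 hb1')) (by linarith : (0:ℝ) ≤ b1 - 1),
      sq_nonneg ((b1-1)*(601/500-b1)), pow_le_pow_left₀ hb1.le hb1' 7]
  -- AM-GM
  have hamgm : 7*b1^3*b2^3 ≤ b2^6 + b2^5*b1 + b2^4*b1^2 + b2^3*b1^3 + b2^2*b1^4 + b2*b1^5 + b1^6 := by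
    nlinarith [sq_nonneg (b1^3-b2^3), mul_nonneg (mul_nonneg hb1.le hb2.le) (sq_nonneg (b1^2-b2^2)),
      mul_nonneg (mul_nonneg (mul_nonneg (mul_nonneg hb1.le hb1.le) hb2.le) hb2.le) (sq_nonneg (b1-b2))]
  have hb24 : b2^4 ≤ (601/500:ℝ)^4 := pow_le_pow_left₀ hb2.le h2' 4
  have hpos17 : (0:ℝ) ≤ 1 + b1^7 := by positivity
  have hb23 : (0:ℝ) < b2^3 := by positivity
  -- key: b2^7*(1+b1^7) ≤ (2-b1)*S7
  have hkey : b2^7*(1+b1^7) ≤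
      (2-b1)*(b2^6 + b2^5*b1 + b2^4*b1^2 + b2^3*b1^3 + b2^2*b1^4 + b2*b1^5 + b1^6) := by
    have s1 : b2^7*(1+b1^7) ≤ b2^3*((601/500)^4*(1+b1^7)) := by
      have : b2^4*(1+b1^7) ≤ (601/500:ℝ)^4*(1+b1^7) := mul_le_mul_of_nonneg_right hb24 hpos17
      nlinarith [this, hb23]
    have s2 : b2^3*((601/500:ℝ)^4*(1+b1^7)) ≤ b2^3*(7*(2-b1)*b1^3) :=
      mul_le_mul_of_nonneg_left hx hb23.le
    have s3 : b2^3*(7*(2-b1)*b1^3) = (2-b1)*(7*b1^3*b2^3) := by ring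
    have h2b1 : (0:ℝ) ≤ 2 - b1 := by linarith
    have s4 : (2-b1)*(7*b1^3*b2^3) ≤
        (2-b1)*(b2^6 + b2^5*b1 + b2^4*b1^2 + b2^3*b1^3 + b2^2*b1^4 + b2*b1^5 + b1^6) :=
      mul_le_mul_of_nonneg_left hamgm h2b1
    linarith [s1, s2, s4, s3.le, s3.ge]
  -- polynomial inequality
  have hpoly : b2^8 - b1^8 + b2^7*b1^7*(b2-b1) ≤ 2*(b2^7 - b1^7) := by
    have hfac : 2*(b2^7 - b1^7) - (b2^8 - b1^8 + b2^7*b1^7*(b2-b1)) =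
        (b2-b1)*((2-b1)*(b2^6 + b2^5*b1 + b2^4*b1^2 + b2^3*b1^3 + b2^2*b1^4 + b2*b1^5 + b1^6)
          - b2^7*(1+b1^7)) := by ring
    nlinarith [mul_nonneg (by linarith : (0:ℝ) ≤ b2 - b1) (by linarith [hkey] : (0:ℝ) ≤
      (2-b1)*(b2^6 + b2^5*b1 + b2^4*b1^2 + b2^3*b1^3 + b2^2*b1^4 + b2*b1^5 + b1^6) - b2^7*(1+b1^7))]
  -- plumbing
  have habs1 : |(b2 ^ 8 - b1 ^ 8) / (b2 ^ 7 - b1 ^ 7)| = (b2 ^ 8 - b1 ^ 8) / (b2 ^ 7 - b1 ^ 7) :=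
    abs_of_nonneg (div_nonneg (by linarith) hd.le)
  have habs2 : |b2 ^ 7 * b1 ^ 7 * (b2 - b1) / (b2 ^ 7 - b1 ^ 7)| =
      b2 ^ 7 * b1 ^ 7 * (b2 - b1) / (b2 ^ 7 - b1 ^ 7) :=
    abs_of_nonneg (div_nonneg (mul_nonneg (by positivity) (by linarith)) hd.le)
  rw [habs1, habs2, ← add_div, div_le_iff₀ hd]
  linarith
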